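/- Let n \u2265 1, let w be a primitive n-th root of unity in \u2102, let U in M_n(\u2102) be the Fourier matrix with (k, l) entry w^{k l} / \u221an, let \u016a be its entrywise complex conjugate, and let S be the cyclic shift matrix with (k, l) entry 1 if k \u2261 l + 1 (mod n) and 0 otherwise. Then for all i, j in {0, ..., n-1}, the following identity holds in the triple Kronecker product M_n(\u2102) \u2297 M_n(\u2102) \u2297 M_n(\u2102): \sum_{k,l} (w^{(k+i)(l+j)} / \u221an) \u00b7 ((S\u1d34)^k \u016a S^l) \u2297 E_{kl} \u2297 E_{ij} = \sum_{s,t} E_{st} \u2297 (w^{i j - s t} \u00b7 Y_{j-t, i-s}) \u2297 E_{ij}, where for integers a, b, Y_{a,b} in M_n(\u2102) has (k, l) entry w^{a k + b l} / n, the exponent i j - s t is an integer power, and E_{pq} denotes the standard matrix unit. -/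

import Mathlib

open Matrix Kronecker
open Fin.NatCast

lemma bsfi_collapse {n : ℕ} (c d : Fin n) (f : Fin n → Fin n → ℂ) :
    (∑ x : Fin n, ∑ y : Fin n, if x = c then if y = d then f x y else 0 else 0) = f c d := by
  have h1 : ∀ x : Fin n, (∑ y : Fin n, if x = c then if y = d then f x y else 0 else 0)
      = if x = c then f x d else 0 := by
    intro x
    split_ifs with hx
    · simp
    · simp
  simp only [h1]
  simp

lemma bsfi_shift_pow {n : ℕ} [NeZero n] (S : Matrix (Fin n) (Fin n) ℂ)
    (hS : ∀ k l : Fin n, S k l = if (k : ℕ) = ((l : ℕ) + 1) % n then 1 else 0) :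
    ∀ (m : ℕ) (k l : Fin n), (S ^ m) k l = if k = l + (m : Fin n) then 1 else 0 := by
  have hS' : ∀ k l : Fin n, S k l = if k = l + 1 then 1 else 0 := by
    intro k l
    rw [hS]
    congr 1
    rw [Fin.ext_iff, Fin.val_add, Fin.val_one', Nat.add_mod_mod]
  intro m
  induction m with
  | zero => intro k l; simp [Matrix.one_apply, eq_comm]
  | succ m ih =>
    intro k l
    rw [pow_succ, Matrix.mul_apply]
    simp only [ih, hS', ite_mul, mul_ite, one_mul, mul_one, mul_zero, zero_mul]
    rw [Finset.sum_ite_eq' Finset.univ (l + 1)]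
    simp [add_assoc, add_comm 1 (m : Fin n), Nat.cast_succ]

lemma bsfi_shiftT_pow {n : ℕ} [NeZero n] (S : Matrix (Fin n) (Fin n) ℂ)
    (hS : ∀ k l : Fin n, S k l = if (k : ℕ) = ((l : ℕ) + 1) % n then 1 else 0)
    (m : ℕ) (k l : Fin n) : ((Sᴴ) ^ m) k l = if l = k + (m : Fin n) then 1 else 0 := by
  rw [← conjTranspose_pow, conjTranspose_apply, bsfi_shift_pow S hS]
  split <;> simp

lemma bsfi_prod_entry {n : ℕ} [NeZero n] (S Ubar : Matrix (Fin n) (Fin n) ℂ)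
    (hS : ∀ k l : Fin n, S k l = if (k : ℕ) = ((l : ℕ) + 1) % n then 1 else 0)
    (k l : ℕ) (p q : Fin n) :
    ((Sᴴ) ^ k * Ubar * S ^ l) p q = Ubar (p + (k : Fin n)) (q + (l : Fin n)) := by
  rw [Matrix.mul_apply]
  simp only [Matrix.mul_apply, bsfi_shift_pow S hS, bsfi_shiftT_pow S hS, ite_mul, mul_ite,
    one_mul, mul_one, mul_zero, zero_mul]
  rw [Finset.sum_ite_eq' Finset.univ (q + (l : Fin n))]
  simp [Finset.sum_ite_eq' Finset.univ (p + (k : Fin n))]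

/-- The computational core of the irregular factorisation of the shift embedding for complete
bipartite digraph algebras: for a primitive `n`-th root of unity `w`, the Fourier matrix `U`,
its entrywise conjugate `Ū`, the cyclic shift `S`, and the rank-one partial isometries
`Y a b` with entries `w^(a k + b l) / n`, one has, for all `i, j`,
`∑_{k,l} (w^((k+i)(l+j))/√n) • (((Sᴴ)^k * Ū * S^l) ⊗ E_{kl}) ⊗ E_{ij}
  = ∑_{s,t} (E_{st} ⊗ (w^(ij - st) • Y (j-t) (i-s))) ⊗ E_{ij}`. -/
theorem bipartite_shift_factorisation_identity {n : ℕ} (hn : 1 ≤ n) (w : ℂ)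
    (hw : IsPrimitiveRoot w n)
    (U : Matrix (Fin n) (Fin n) ℂ)
    (hU : ∀ k l : Fin n, U k l = w ^ ((k : ℕ) * (l : ℕ)) / (Real.sqrt n : ℂ))
    (Ubar : Matrix (Fin n) (Fin n) ℂ)
    (hUbar : ∀ k l : Fin n, Ubar k l = (starRingEnd ℂ) (U k l))
    (S : Matrix (Fin n) (Fin n) ℂ)
    (hS : ∀ k l : Fin n, S k l = if (k : ℕ) = ((l : ℕ) + 1) % n then 1 else 0)
    (Y : ℤ → ℤ → Matrix (Fin n) (Fin n) ℂ)
    (hY : ∀ (a b : ℤ) (k l : Fin n), Y a b k l = w ^ (a * (k : ℕ) + b * (l : ℕ)) / (n : ℂ))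
    (i j : Fin n) :
    ∑ k : Fin n, ∑ l : Fin n,
        (w ^ (((k : ℕ) + (i : ℕ)) * ((l : ℕ) + (j : ℕ))) / (Real.sqrt n : ℂ)) •
          ((((Sᴴ) ^ (k : ℕ) * Ubar * S ^ (l : ℕ)) ⊗ₖ Matrix.single k l (1 : ℂ)) ⊗ₖ
            Matrix.single i j (1 : ℂ))
      = ∑ s : Fin n, ∑ t : Fin n,
          ((Matrix.single s t (1 : ℂ)) ⊗ₖ
              (w ^ ((i : ℤ) * (j : ℤ) - (s : ℤ) * (t : ℤ)) •
                Y ((j : ℤ) - (t : ℤ)) ((i : ℤ) - (s : ℤ)))) ⊗ₖ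
            Matrix.single i j (1 : ℂ) := by
  haveI : NeZero n := ⟨by omega⟩
  have hwne : w ≠ 0 := hw.ne_zero (by omega)
  have hw1 : w ^ n = 1 := hw.pow_eq_one
  have hnorm : ‖w‖ = 1 := Complex.norm_eq_one_of_pow_eq_one hw1 (by omega)
  have hcw : (starRingEnd ℂ) w = w⁻¹ := (Complex.inv_eq_conj hnorm).symm
  have hmod : ∀ a b : ℤ, (n : ℤ) ∣ (a - b) → w ^ a = w ^ b := by
    intro a b ⟨c, hc⟩
    have ha : a = b + (n : ℤ) * c := by linarith
    rw [ha, zpow_add₀ hwne, _root_.zpow_mul, zpow_natCast, hw1, _root_.one_zpow, mul_one]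
  have hsqrt : (Real.sqrt n : ℂ) * (Real.sqrt n : ℂ) = (n : ℂ) := by
    rw [← Complex.ofReal_mul, Real.mul_self_sqrt (by positivity)]; norm_cast
  ext ⟨⟨p, K⟩, a⟩ ⟨⟨q, L⟩, b⟩
  simp only [Matrix.sum_apply, Matrix.smul_apply, Matrix.kroneckerMap_apply, smul_eq_mul,
    Matrix.single, Matrix.of_apply, mul_ite, ite_mul, mul_one, mul_zero, one_mul,
    zero_mul, Finset.sum_ite_eq, Finset.sum_ite_eq', Finset.mem_univ, if_true,
    Finset.sum_ite_irrel, Finset.sum_const_zero]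
  split_ifs with h
  · simp only [ite_and]
    rw [bsfi_collapse, bsfi_collapse]
    rw [bsfi_prod_entry S Ubar hS, hUbar, hU, hY]
    simp only [Fin.cast_val_eq_self]
    rw [map_div₀, map_pow, hcw, Complex.conj_ofReal]
    rw [inv_pow, ← zpow_natCast w (((p + K) : Fin n) * ((q + L) : Fin n) : ℕ), ← _root_.zpow_neg]
    rw [div_mul_div_comm, hsqrt]
    rw [← zpow_natCast w ((((K : ℕ) + (i : ℕ))) * (((L : ℕ) + (j : ℕ)))), ← zpow_add₀ hwne]
    rw [mul_div_assoc', ← zpow_add₀ hwne]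
    congr 1
    apply hmod
    have hm : ((((p : ℕ) + (K : ℕ)) % n) * (((q : ℕ) + (L : ℕ)) % n))
        ≡ (((p : ℕ) + (K : ℕ)) * ((q : ℕ) + (L : ℕ))) [MOD n] :=
      (Nat.mod_modEq _ n).mul (Nat.mod_modEq _ n)
    obtain ⟨c, hc⟩ := hm.dvd
    refine ⟨c, ?_⟩
    rw [Fin.val_add, Fin.val_add]
    push_cast at hc ⊢
    linear_combination hc
  · rfl
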